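/- Let S be a set and e : S ≃ S a bijection with the orbit {eⁿ(s) : n ∈ ℤ} of every s ∈ S infinite, let T = FreeGroup.freeGroupCongr e be the induced automorphism of Γ = FreeGroup S, and let k ≥ 1. For finitely supported functions c₁, …, c_k : Γ → ℂ there exists N ∈ ℕ such that for every n : {1,…,k} → ℤ with |n(i) − n(j)| ≥ N for all i ≠ j, the continuous linear operators B_i := Σ_{g ∈ supp c_i} c_i(g) · λ(T^{n(i)}(g)) on ℓ²(Γ;ℂ) satisfy ⟨δ₁, B₁B₂⋯B_k δ₁⟩ = c₁(1) · c₂(1) ⋯ c_k(1). -/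

import Mathlib

open scoped ENNReal InnerProductSpace

noncomputable section

private theorem translMem {X : Type*} (e : X ≃ X) (f : lp (fun _ : X => ℂ) 2) :
    Memℓp (fun x => f (e x)) 2 := by
  apply memℓp_gen
  exact (Equiv.summable_iff e (f := fun i => ‖f i‖ ^ (2 : ℝ≥0∞).toReal)).2
    ((lp.memℓp f).summable (by norm_num))

/-- The linear isometry equivalence `f ↦ f ∘ e` of `ℓ²(X;ℂ)` induced by a bijection
`e` of `X`. -/
def translIso {X : Type*} (e : X ≃ X) :
    lp (fun _ : X => ℂ) 2 ≃ₗᵢ[ℂ] lp (fun _ : X => ℂ) 2 where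
  toFun f := ⟨fun x => f (e x), translMem e f⟩
  invFun f := ⟨fun x => f (e.symm x), translMem e.symm f⟩
  map_add' f g := by ext x; simp [lp.coeFn_add]; rfl
  map_smul' c f := by ext x; simp [lp.coeFn_smul]
  left_inv f := by ext x; simp
  right_inv f := by ext x; simp
  norm_map' f := by
    rw [lp.norm_eq_tsum_rpow (by norm_num), lp.norm_eq_tsum_rpow (by norm_num)]
    congr 1
    exact e.tsum_eq (f := fun x => ‖f x‖ ^ (2 : ℝ≥0∞).toReal)

/-- The left translation `λ(g)` on `ℓ²(Γ;ℂ)`, given by `(λ(g) f)(x) = f (g⁻¹ * x)`,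
as a continuous linear operator. -/
def leftTransl {Γ : Type*} [Group Γ] (g : Γ) :
    lp (fun _ : Γ => ℂ) 2 →L[ℂ] lp (fun _ : Γ => ℂ) 2 :=
  (translIso (Equiv.mulLeft g⁻¹)).toLinearIsometry.toContinuousLinearMap

section Aux
variable {Γ : Type*} [Group Γ] [DecidableEq Γ]

theorem leftTransl_single (g x : Γ) (a : ℂ) :
    leftTransl g (lp.single 2 x a) = lp.single 2 (g * x) a := by
  refine lp.ext (funext fun y => ?_)
  have : (leftTransl g (lp.single 2 x a) : ∀ _ : Γ, ℂ) y
      = (lp.single 2 x a : ∀ _ : Γ, ℂ) (g⁻¹ * y) := rfl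
  rw [this, lp.single_apply, lp.single_apply, Pi.single_apply, Pi.single_apply]
  by_cases h : y = g * x
  · rw [if_pos (by rw [h]; group), if_pos h]
  · rw [if_neg (fun hc => h (by rw [← inv_mul_eq_iff_eq_mul.mp hc])), if_neg h]

/-- `vecL d = ∑ g, d g • δ_g`. -/
def vecL (Γ : Type*) [Group Γ] [DecidableEq Γ] : (Γ →₀ ℂ) →ₗ[ℂ] lp (fun _ : Γ => ℂ) 2 :=
  Finsupp.linearCombination ℂ (fun g : Γ => lp.single 2 g (1 : ℂ))

theorem vecL_single (g : Γ) (a : ℂ) : vecL Γ (Finsupp.single g a) = a • lp.single 2 g 1 :=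
  Finsupp.linearCombination_single ..

theorem inner_vecL (d : Γ →₀ ℂ) :
    ⟪(lp.single 2 (1 : Γ) (1 : ℂ) : lp (fun _ : Γ => ℂ) 2), vecL Γ d⟫_ℂ = d 1 := by
  rw [vecL, Finsupp.linearCombination_apply, Finsupp.sum, inner_sum]
  have : ∀ g : Γ, ⟪(lp.single 2 (1 : Γ) (1 : ℂ) : lp (fun _ : Γ => ℂ) 2),
      d g • lp.single 2 g 1⟫_ℂ = if (1 : Γ) = g then d g else 0 := by
    intro g
    rw [inner_smul_right, lp.inner_single_left]
    by_cases h : (1 : Γ) = g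
    · subst h; simp [lp.single_apply_self, RCLike.inner_apply]
    · rw [lp.single_apply_ne 2 g _ h]; simp [h]
  rw [Finset.sum_congr rfl fun g _ => this g, Finset.sum_ite_eq]
  by_cases h : (1 : Γ) ∈ d.support
  · rw [if_pos h]
  · rw [if_neg h, eq_comm]
    exact Finsupp.notMem_support_iff.mp h

end Aux

section Aux2
variable {Γ : Type*} [Group Γ] [DecidableEq Γ]

/-- `Bop d = ∑ h, d h • λ(h)`. -/
def Bop (d : MonoidAlgebra ℂ Γ) : lp (fun _ : Γ => ℂ) 2 →L[ℂ] lp (fun _ : Γ => ℂ) 2 :=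
  d.coeff.sum fun h a => a • leftTransl h

theorem Bop_vecL (d q : MonoidAlgebra ℂ Γ) :
    Bop d (vecL Γ q.coeff) = vecL Γ (d * q).coeff := by
  have hL : ∀ h : Γ, leftTransl h (vecL Γ q.coeff) = q.coeff.sum fun x b => b • lp.single 2 (h * x) 1 := by
    intro h
    rw [vecL, Finsupp.linearCombination_apply, map_finsuppSum]
    exact Finsupp.sum_congr fun x _ => by
      rw [map_smul, leftTransl_single]
  have hl : Bop d (vecL Γ q.coeff)
      = d.coeff.sum fun h a => q.coeff.sum fun x b => (a * b) • lp.single 2 (h * x) 1 := by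
    rw [Bop, Finsupp.sum, ContinuousLinearMap.sum_apply, Finsupp.sum]
    refine Finset.sum_congr rfl fun h _ => ?_
    rw [ContinuousLinearMap.smul_apply, hL, Finsupp.smul_sum]
    simp only [smul_smul]
  rw [hl, MonoidAlgebra.mul_def, MonoidAlgebra.coeff_finsuppSum, map_finsuppSum]
  refine Finsupp.sum_congr fun h _ => ?_
  rw [MonoidAlgebra.coeff_finsuppSum, map_finsuppSum]
  refine Finsupp.sum_congr fun x _ => ?_
  rw [MonoidAlgebra.coeff_single, show vecL Γ (Finsupp.single (h * x) (d.coeff h * q.coeff x)) = (d.coeff h * q.coeff x) • lp.single 2 (h * x) 1 from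
    Finsupp.linearCombination_single ..]

theorem prod_Bop_one (l : List (MonoidAlgebra ℂ Γ)) :
    (l.map Bop).prod (lp.single 2 (1 : Γ) (1 : ℂ)) = vecL Γ l.prod.coeff := by
  induction l with
  | nil =>
      rw [List.map_nil, List.prod_nil, List.prod_nil, ContinuousLinearMap.one_apply,
        show (1 : MonoidAlgebra ℂ Γ) = MonoidAlgebra.single 1 1 from MonoidAlgebra.one_def,
        show vecL Γ (MonoidAlgebra.single (1:Γ) (1:ℂ)).coeff = (1:ℂ) • lp.single 2 (1:Γ) (1:ℂ) from
          Finsupp.linearCombination_single .., one_smul]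
  | cons d l ih =>
      rw [List.map_cons, List.prod_cons, ContinuousLinearMap.mul_apply, ih, Bop_vecL,
        List.prod_cons]

-- combinatorial part
theorem mul_apply_one_key (f Q : MonoidAlgebra ℂ Γ) (π : Γ →* Γ)
    (hf : ∀ g ∈ f.coeff.support, π g = g) (hQ : ∀ h ∈ Q.coeff.support, π h = 1) :
    (f * Q).coeff 1 = f.coeff 1 * Q.coeff 1 := by
  rw [MonoidAlgebra.coeff_mul_apply_left, Finsupp.sum]
  rw [Finset.sum_eq_single (1 : Γ) ?h0 ?h1]
  · simp
  · intro g hg hg1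
    have hQ0 : Q.coeff (g⁻¹ * 1) = 0 := by
      rw [mul_one]
      by_contra hne
      have hmem : g⁻¹ ∈ Q.coeff.support := Finsupp.mem_support_iff.mpr hne
      have h1 : π g⁻¹ = 1 := hQ _ hmem
      have h2 : π g⁻¹ = g⁻¹ := by rw [map_inv, hf g hg]
      exact hg1 (inv_eq_one.mp (h2.symm.trans h1))
    rw [hQ0, mul_zero]
  · intro h1
    rw [Finsupp.notMem_support_iff.mp h1, zero_mul]

theorem prod_support_killed (π : Γ →* Γ) (l : List (MonoidAlgebra ℂ Γ))
    (h : ∀ d ∈ l, ∀ x ∈ d.coeff.support, π x = 1) :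
    ∀ x ∈ l.prod.coeff.support, π x = 1 := by
  induction l with
  | nil =>
      intro x hx
      rw [List.prod_nil, MonoidAlgebra.one_def, MonoidAlgebra.coeff_single] at hx
      rw [Finset.mem_singleton.mp (Finsupp.support_single_subset hx), map_one]
  | cons d l ih =>
      intro x hx
      rw [List.prod_cons] at hx
      obtain ⟨y, hy, z, hz, rfl⟩ := Finset.mem_mul.mp (MonoidAlgebra.support_coeff_mul_subset d l.prod hx)
      rw [map_mul, h d List.mem_cons_self y hy, ih (fun d' hd' => h d' (List.mem_cons_of_mem _ hd')) z hz,
        one_mul]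

theorem key_prod_apply_one : ∀ (k : ℕ) (d : Fin k → MonoidAlgebra ℂ Γ) (π : Fin k → (Γ →* Γ)),
    (∀ i, ∀ g ∈ (d i).coeff.support, π i g = g) →
    (∀ i j, i ≠ j → ∀ g ∈ (d j).coeff.support, π i g = 1) →
    (List.ofFn d).prod.coeff 1 = ∏ i, (d i).coeff 1 := by
  intro k
  induction k with
  | zero =>
      intro d π _ _
      rw [List.ofFn_zero, List.prod_nil, Finset.univ_eq_empty, Finset.prod_empty,
        MonoidAlgebra.one_def]
      simp
  | succ k ih =>
      intro d π hfix hkill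
      rw [List.ofFn_succ, List.prod_cons]
      have hQ : ∀ x ∈ (List.ofFn fun i : Fin k => d i.succ).prod.coeff.support, π 0 x = 1 := by
        refine prod_support_killed _ _ ?_
        intro d' hd'
        obtain ⟨i, rfl⟩ := List.mem_ofFn.mp hd'
        exact hkill 0 i.succ (Fin.succ_ne_zero i).symm
      rw [mul_apply_one_key _ _ (π 0) (hfix 0) hQ,
        ih (fun i => d i.succ) (fun i => π i.succ) (fun i => hfix i.succ)
          (fun i j hij => hkill i.succ j.succ (fun hc => hij (Fin.succ_injective _ hc))),
        Fin.prod_univ_succ]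

end Aux2


-- ℤ-power injectivity from infinite orbit
theorem inj_zpow_apply {S : Type*} (e : Equiv.Perm S) (b : S)
    (h : (Set.range fun m : ℤ => (e ^ m) b).Infinite) :
    Function.Injective fun m : ℤ => (e ^ m) b := by
  intro m₁ m₂ hm
  by_contra hne
  apply h
  set g : ℤ → S := fun m => (e ^ m) b with hg
  have hadd : ∀ p q : ℤ, g (p + q) = (e ^ p) (g q) := by
    intro p q
    rw [hg]
    simp only
    rw [zpow_add, Equiv.Perm.mul_apply]
  have hper : Function.Periodic g (m₂ - m₁) := by
    intro x
    calc g (x + (m₂ - m₁)) = g ((x - m₁) + m₂) := by rw [show x + (m₂ - m₁) = (x - m₁) + m₂ by ring]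
      _ = (e ^ (x - m₁)) (g m₂) := hadd _ _
      _ = (e ^ (x - m₁)) (g m₁) := by rw [← hm]
      _ = g ((x - m₁) + m₁) := (hadd _ _).symm
      _ = g x := by rw [sub_add_cancel]
  have hd : m₂ - m₁ ≠ 0 := sub_ne_zero.mpr (fun hc => hne hc.symm)
  -- get a positive period
  obtain ⟨D, hD0, hPD⟩ : ∃ D : ℤ, 0 < D ∧ Function.Periodic g D := by
    rcases lt_or_gt_of_ne hd with hlt | hgt
    · exact ⟨-(m₂ - m₁), by omega, hper.neg⟩
    · exact ⟨m₂ - m₁, hgt, hper⟩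
  have hmod : ∀ m : ℤ, g m = g (m % D) := by
    intro m
    have : m % D = m - (m / D) • D := by
      rw [smul_eq_mul, Int.emod_def, mul_comm]
    rw [this, hPD.sub_zsmul_eq]
  have : Set.range g ⊆ g '' Set.Ico 0 D := by
    rintro y ⟨m, rfl⟩
    exact ⟨m % D, ⟨Int.emod_nonneg m hD0.ne', Int.emod_lt_of_pos m hD0⟩, (hmod m).symm⟩
  exact ((Set.finite_Ico 0 D).image g).subset this

/-- Existence of a separation constant for a finite alphabet. -/
theorem exists_sep {S : Type*} (e : S ≃ S)
    (horb : ∀ s : S, (Set.range fun n : ℤ => (e ^ n) s).Infinite) (A : Finset S) :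
    ∃ N : ℕ, ∀ m : ℤ, (N : ℤ) ≤ |m| → ∀ a ∈ A, ∀ b ∈ A, (e ^ m) a ≠ b := by
  classical
  have hfin : (⋃ a ∈ (A : Set S), ⋃ b ∈ (A : Set S), {m : ℤ | (e ^ m) a = b}).Finite := by
    refine A.finite_toSet.biUnion fun a _ => A.finite_toSet.biUnion fun b _ => ?_
    refine Set.Subsingleton.finite ?_
    intro m₁ h₁ m₂ h₂
    exact inj_zpow_apply e a (horb a) (h₁.trans h₂.symm)
  refine ⟨(hfin.toFinset.image Int.natAbs).sup id + 1, fun m hm a ha b hb hc => ?_⟩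
  have hmem : m ∈ hfin.toFinset := by
    rw [Set.Finite.mem_toFinset]
    exact Set.mem_biUnion ha (Set.mem_biUnion hb hc)
  have : m.natAbs ≤ (hfin.toFinset.image Int.natAbs).sup id :=
    Finset.le_sup (f := id) (Finset.mem_image_of_mem Int.natAbs hmem)
  have habs : |m| = (m.natAbs : ℤ) := Int.abs_eq_natAbs m
  omega

-- words with letters in A lie in the subgroup generated by of '' A
theorem mk_mem_closure {S : Type*} (A : Set S) :
    ∀ (L : List (S × Bool)), (∀ p ∈ L, p.1 ∈ A) →
      FreeGroup.mk L ∈ Subgroup.closure (FreeGroup.of '' A) := by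
  intro L
  induction L with
  | nil =>
      intro _
      rw [← FreeGroup.one_eq_mk]
      exact Subgroup.one_mem _
  | cons p L ih =>
      intro hL
      have : FreeGroup.mk (p :: L) = FreeGroup.mk [p] * FreeGroup.mk L := by
        rw [FreeGroup.mul_mk]
        rfl
      rw [this]
      have hofp : FreeGroup.of p.1 ∈ Subgroup.closure (FreeGroup.of '' A) :=
        Subgroup.subset_closure ⟨p.1, hL p List.mem_cons_self, rfl⟩
      have hp : FreeGroup.mk [p] ∈ Subgroup.closure (FreeGroup.of '' A) := by
        rcases p with ⟨s, b⟩
        cases b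
        · have : FreeGroup.mk [(s, false)] = (FreeGroup.of s)⁻¹ := by
            rw [show FreeGroup.of s = FreeGroup.mk [(s, true)] from rfl, FreeGroup.inv_mk]
            rfl
          rw [this]
          exact Subgroup.inv_mem _ hofp
        · exact hofp
      exact Subgroup.mul_mem _ hp (ih fun q hq => hL q (List.mem_cons_of_mem p hq))

theorem mem_closure_of_letters {S : Type*} [DecidableEq S] (A : Set S) (g : FreeGroup S)
    (h : ∀ p ∈ g.toWord, p.1 ∈ A) : g ∈ Subgroup.closure (FreeGroup.of '' A) := by
  rw [← FreeGroup.mk_toWord (x := g)]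
  exact mk_mem_closure A g.toWord h

-- the homomorphism Perm S →* MulAut (FreeGroup S)
def permToAut (S : Type*) : Equiv.Perm S →* MulAut (FreeGroup S) :=
  MonoidHom.mk' (fun u => FreeGroup.freeGroupCongr u) (by
    intro u v
    ext x
    show FreeGroup.map (⇑(u * v)) x = FreeGroup.map u (FreeGroup.map v x)
    rw [FreeGroup.map.comp]
    rfl)

theorem congr_zpow_of {S : Type*} (e : S ≃ S) (m : ℤ) (s : S) :
    (FreeGroup.freeGroupCongr e ^ m : FreeGroup S ≃* FreeGroup S) (FreeGroup.of s)
      = FreeGroup.of ((e ^ m) s) := by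
  have : (FreeGroup.freeGroupCongr e ^ m : FreeGroup S ≃* FreeGroup S)
      = FreeGroup.freeGroupCongr (e ^ m) := by
    rw [show FreeGroup.freeGroupCongr e = permToAut S e from rfl, ← map_zpow]
    rfl
  rw [this]
  exact FreeGroup.map.of



/-- Theorem 4.1: a strongly mixing group system is k-mixing, expressed
on the dense group algebra. Let `e : S ≃ S` have all orbits infinite and
`T = FreeGroup.freeGroupCongr e`. For finitely supported `c 0, …, c (k-1) : Γ → ℂ`
(`Γ = FreeGroup S`) there is `N` such that whenever `|n i − n j| ≥ N` for all `i ≠ j`,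
the operators `B i = Σ_{g ∈ supp (c i)} c i g • λ(T^{n i} g)` on `ℓ²(Γ;ℂ)` satisfy
`⟪δ₁, B 0 ⋯ B (k-1) δ₁⟫ = c 0 1 * ⋯ * c (k-1) 1`. -/
theorem free_joinings_stmt9
    {S : Type*} [DecidableEq S] (e : S ≃ S)
    (horb : ∀ s : S, (Set.range fun n : ℤ => (e ^ n) s).Infinite)
    (k : ℕ) (hk : 1 ≤ k) (c : Fin k → (FreeGroup S →₀ ℂ)) :
    ∃ N : ℕ, ∀ n : Fin k → ℤ, (∀ i j, i ≠ j → (N : ℤ) ≤ |n i - n j|) →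
      ⟪(lp.single 2 (1 : FreeGroup S) (1 : ℂ) : lp (fun _ : FreeGroup S => ℂ) 2),
        (List.ofFn fun i =>
            ∑ g ∈ (c i).support, c i g •
              leftTransl ((FreeGroup.freeGroupCongr e ^ n i :
                FreeGroup S ≃* FreeGroup S) g)).prod
          (lp.single 2 (1 : FreeGroup S) (1 : ℂ))⟫_ℂ
        = ∏ i, c i 1 := by
  classical
  set A : Finset S := Finset.univ.biUnion fun i : Fin k =>
    (c i).support.biUnion fun g => (g.toWord.map Prod.fst).toFinset with hA
  obtain ⟨N, hN⟩ := exists_sep e horb A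
  refine ⟨N, fun n hn => ?_⟩
  let T : Fin k → (FreeGroup S ≃* FreeGroup S) := fun i => FreeGroup.freeGroupCongr e ^ n i
  have hTdef : ∀ i, T i = FreeGroup.freeGroupCongr e ^ n i := fun i => rfl
  set c' : Fin k → MonoidAlgebra ℂ (FreeGroup S) :=
    fun i => MonoidAlgebra.ofCoeff (Finsupp.equivMapDomain (T i).toEquiv (c i)) with hc'
  -- rewrite the operators
  have hop : ∀ i : Fin k,
      (∑ g ∈ (c i).support, c i g • leftTransl ((FreeGroup.freeGroupCongr e ^ n i :
        FreeGroup S ≃* FreeGroup S) g)) = (Bop ∘ c') i := by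
    intro i
    show _ = Bop (MonoidAlgebra.ofCoeff (Finsupp.equivMapDomain (T i).toEquiv (c i)))
    rw [Bop, MonoidAlgebra.coeff_ofCoeff, Finsupp.sum,
      show (Finsupp.equivMapDomain (T i).toEquiv (c i)).support
        = (c i).support.map (T i).toEquiv.toEmbedding from rfl, Finset.sum_map]
    refine Finset.sum_congr rfl fun g _ => ?_
    rw [show ((T i).toEquiv.toEmbedding g) = (T i) g from rfl, Finsupp.equivMapDomain_apply,
      show (T i).toEquiv.symm ((T i) g) = g from (T i).toEquiv.symm_apply_apply g, ← hTdef i]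
  have heq : (List.ofFn fun i =>
      ∑ g ∈ (c i).support, c i g • leftTransl ((FreeGroup.freeGroupCongr e ^ n i :
        FreeGroup S ≃* FreeGroup S) g)) = List.map Bop (List.ofFn c') := by
    rw [List.map_ofFn]
    exact congrArg List.ofFn (funext hop)
  rw [heq, prod_Bop_one, inner_vecL]
  -- the letter sets and retraction homomorphisms
  set Li : Fin k → Finset S := fun i => A.image fun s => (e ^ n i) s with hLi
  set π : Fin k → (FreeGroup S →* FreeGroup S) :=
    fun i => FreeGroup.lift fun s => if s ∈ Li i then FreeGroup.of s else 1 with hπ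
  have hπof : ∀ i s, π i (FreeGroup.of s) = if s ∈ Li i then FreeGroup.of s else 1 :=
    fun i s => FreeGroup.lift_apply_of
  have hdisj : ∀ i j, i ≠ j → ∀ s ∈ Li j, s ∉ Li i := by
    intro i j hij s hsj hsi
    obtain ⟨b, hb, rfl⟩ := Finset.mem_image.mp hsj
    obtain ⟨a, ha, hab⟩ := Finset.mem_image.mp hsi
    have hkey : (e ^ (n i - n j)) a = b := by
      have h2 := congrArg (⇑(e ^ (-(n j)))) hab
      rw [← Equiv.Perm.mul_apply, ← Equiv.Perm.mul_apply, ← zpow_add, ← zpow_add,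
        show -n j + n j = 0 by ring, zpow_zero, show -n j + n i = n i - n j by ring] at h2
      exact h2.trans rfl
    exact hN (n i - n j) (hn i j hij) a ha b hb hkey
  -- supports lie in the relevant subgroups
  have hsuppK : ∀ i, ∀ x ∈ (c' i).coeff.support,
      x ∈ Subgroup.closure (FreeGroup.of '' (Li i : Set S)) := by
    intro i x hx
    rw [hc', MonoidAlgebra.coeff_ofCoeff] at hx
    rw [show (Finsupp.equivMapDomain (T i).toEquiv (c i)).support
        = (c i).support.map (T i).toEquiv.toEmbedding from rfl, Finset.mem_map] at hx
    obtain ⟨g, hg, rfl⟩ := hx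
    have hgA : g ∈ Subgroup.closure (FreeGroup.of '' (A : Set S)) := by
      refine mem_closure_of_letters _ g fun p hp => ?_
      rw [hA]
      rw [Finset.coe_biUnion]
      refine Set.mem_biUnion (Finset.mem_coe.mpr (Finset.mem_univ i)) ?_
      rw [Finset.coe_biUnion]
      refine Set.mem_biUnion (Finset.mem_coe.mpr hg) ?_
      rw [Finset.mem_coe, List.mem_toFinset]
      exact List.mem_map.mpr ⟨p, hp, rfl⟩
    have hmap := Subgroup.mem_map_of_mem (T i).toMonoidHom hgA
    rw [MonoidHom.map_closure] at hmap
    have himg : ((T i).toMonoidHom '' (FreeGroup.of '' (A : Set S)))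
        = FreeGroup.of '' (Li i : Set S) := by
      rw [hLi]
      rw [← Set.image_comp, Finset.coe_image, ← Set.image_comp]
      refine Set.image_congr fun s _ => ?_
      show (T i) (FreeGroup.of s) = FreeGroup.of ((e ^ n i) s)
      rw [hTdef i]
      exact congr_zpow_of e (n i) s
    rw [himg] at hmap
    exact hmap
  have hfix : ∀ i, ∀ x ∈ (c' i).coeff.support, π i x = x := by
    intro i x hx
    have : Set.EqOn (π i) (MonoidHom.id (FreeGroup S))
        (Subgroup.closure (FreeGroup.of '' (Li i : Set S)) : Set (FreeGroup S)) := by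
      refine MonoidHom.eqOn_closure fun y hy => ?_
      obtain ⟨s, hs, rfl⟩ := hy
      rw [hπof i s, if_pos (Finset.mem_coe.mp hs)]
      rfl
    exact this (hsuppK i x hx)
  have hkill : ∀ i j, i ≠ j → ∀ x ∈ (c' j).coeff.support, π i x = 1 := by
    intro i j hij x hx
    have hle : Subgroup.closure (FreeGroup.of '' (Li j : Set S)) ≤ (π i).ker := by
      rw [Subgroup.closure_le]
      rintro y ⟨s, hs, rfl⟩
      rw [SetLike.mem_coe, MonoidHom.mem_ker, hπof i s,
        if_neg (hdisj i j hij s (Finset.mem_coe.mp hs))]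
    exact hle (hsuppK j x hx)
  rw [key_prod_apply_one k c' π hfix hkill]
  refine Finset.prod_congr rfl fun i _ => ?_
  rw [hc']
  show (c i) ((T i).toEquiv.symm 1) = c i 1
  rw [show (T i).toEquiv.symm (1 : FreeGroup S) = (T i).symm 1 from rfl, map_one]

end
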